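/- Let r ≥ 2 be an integer. In the graph G_r: (a) for all integers 2 ≤ i ≤ j ≤ r there exist a vertex in level i and a vertex in level j that are distinct and adjacent in G_r; (b) within each level k, consecutive vertices are adjacent, i.e., (k, m) is adjacent to (k, m+1) for 1 ≤ m < 2^k and (k, 2^k) is adjacent to (k, 1), so each level induces a connected subgraph. Consequently, contracting each level of G_r to a single vertex yields a complete graph on the r − 1 levels, so G_r has a clique minor of size r − 1. -/

import Mathlib

/-- Polar radius of the level-`k` vertices of the construction `G_r`. -/
noncomputable def rho (r k : ℕ) : ℝ :=
  Real.arsinh (Real.sinh (r : ℝ) / Real.sin (Real.pi / 2 ^ k))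

/-- Polar angle of the `m`-th vertex of level `k`. -/
noncomputable def theta (k m : ℕ) : ℝ :=
  (2 * (m : ℝ) - 1) * Real.pi / 2 ^ k

/-- Vertices of `G_r`: the root (`none`) together with pairs `(k, m)`. -/
abbrev Vertex : Type := Option (ℕ × ℕ)

/-- The pairs `(k, m)` with `2 ≤ k ≤ r` and `1 ≤ m ≤ 2^k` (together with the
root) are the actual vertices of `G_r`. -/
def ValidVertex (r : ℕ) : Vertex → Prop
  | none => True
  | some (k, m) => 2 ≤ k ∧ k ≤ r ∧ 1 ≤ m ∧ m ≤ 2 ^ k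

/-- Two vertices represent points at hyperbolic distance at most `2r`
(expressed via the hyperbolic law of cosines). -/
def HypClose (r : ℕ) : Vertex → Vertex → Prop
  | none, none => False
  | none, some (k, _) => rho r k ≤ 2 * (r : ℝ)
  | some (k, _), none => rho r k ≤ 2 * (r : ℝ)
  | some (k, m), some (k', m') =>
      Real.cosh (rho r k) * Real.cosh (rho r k') -
          Real.sinh (rho r k) * Real.sinh (rho r k') *
            Real.cos (theta k m - theta k' m') ≤ Real.cosh (2 * (r : ℝ))

/-- The hyperbolic uniform disk graph `G_r` of the construction: two distinct
vertices are adjacent iff the corresponding points have hyperbolic distance at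
most `2r`. -/
def Gr (r : ℕ) : SimpleGraph Vertex where
  Adj u v := u ≠ v ∧ HypClose r u v
  symm := by
    constructor
    rintro (_ | ⟨k, m⟩) (_ | ⟨k', m'⟩) ⟨hne, h⟩
    · exact ⟨hne.symm, h⟩
    · exact ⟨hne.symm, h⟩
    · exact ⟨hne.symm, h⟩
    · refine ⟨hne.symm, ?_⟩
      simp only [HypClose] at h ⊢
      have hc : Real.cos (theta k' m' - theta k m) = Real.cos (theta k m - theta k' m') := by
        rw [show theta k' m' - theta k m = -(theta k m - theta k' m') by ring, Real.cos_neg]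
      have h1 : Real.cosh (rho r k') * Real.cosh (rho r k) =
          Real.cosh (rho r k) * Real.cosh (rho r k') := mul_comm _ _
      have h2 : Real.sinh (rho r k') * Real.sinh (rho r k) =
          Real.sinh (rho r k) * Real.sinh (rho r k') := mul_comm _ _
      rw [hc, h1, h2]
      exact h
  loopless := by
    constructor
    rintro v ⟨hne, _⟩
    exact hne rfl

section Aux

open Real

lemma GrAux.sin_lvl_pos (k : ℕ) (hk : 1 ≤ k) : 0 < Real.sin (π / 2 ^ k) := by
  apply Real.sin_pos_of_pos_of_lt_pi
  · positivity
  · have h1 : (2:ℝ) ≤ 2 ^ k := by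
      calc (2:ℝ) = 2 ^ 1 := by norm_num
      _ ≤ 2 ^ k := by exact pow_le_pow_right₀ (by norm_num) hk
    rw [div_lt_iff₀ (by positivity)]
    nlinarith [Real.pi_pos]

lemma GrAux.sin_lvl_lb (k : ℕ) (hk : 1 ≤ k) : 2 / 2 ^ k ≤ Real.sin (π / 2 ^ k) := by
  have h2 : (2:ℝ) ≤ 2 ^ k := by
    calc (2:ℝ) = 2 ^ 1 := by norm_num
    _ ≤ 2 ^ k := by exact pow_le_pow_right₀ (by norm_num) hk
  have hle : π / 2 ^ k ≤ π / 2 := by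
    apply div_le_div_of_nonneg_left Real.pi_pos.le (by norm_num) h2
  have := Real.mul_le_sin (x := π / 2 ^ k) (by positivity) hle
  have hπ : Real.pi ≠ 0 := Real.pi_ne_zero
  calc 2 / 2 ^ k = 2 / π * (π / 2 ^ k) := by field_simp
  _ ≤ Real.sin (π / 2 ^ k) := this

lemma GrAux.rho_nonneg (r k : ℕ) (hk : 1 ≤ k) : 0 ≤ rho r k := by
  rw [rho]
  rw [Real.arsinh_nonneg_iff]
  exact div_nonneg (Real.sinh_nonneg_iff.2 (by positivity)) (GrAux.sin_lvl_pos k hk).le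

lemma GrAux.sinh_rho_mul (r k : ℕ) (hk : 1 ≤ k) :
    Real.sinh (rho r k) * Real.sin (π / 2 ^ k) = Real.sinh r := by
  rw [rho, Real.sinh_arsinh, div_mul_cancel₀]
  exact (GrAux.sin_lvl_pos k hk).ne'

lemma GrAux.sinh_rho_nonneg (r k : ℕ) (hk : 1 ≤ k) : 0 ≤ Real.sinh (rho r k) :=
  Real.sinh_nonneg_iff.2 (GrAux.rho_nonneg r k hk)

lemma GrAux.cosh_le_one_add_sinh {x : ℝ} (hx : 0 ≤ x) : Real.cosh x ≤ 1 + Real.sinh x := by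
  have h := Real.cosh_sub_sinh x
  have h2 : Real.exp (-x) ≤ 1 := Real.exp_le_one_iff.2 (by linarith)
  linarith

lemma GrAux.exp_lb : ∀ n : ℕ, 3 ≤ n → (2:ℝ) ^ (n + 1) + 1 ≤ Real.exp n := by
  intro n hn
  induction n with
  | zero => omega
  | succ m ih =>
    rcases Nat.lt_or_ge m 3 with h | h
    · have hm : m = 2 := by omega
      subst hm
      have h3 : Real.exp ((3:ℕ):ℝ) = Real.exp 1 ^ 3 := by
        rw [← Real.exp_nat_mul]
        norm_num
      rw [h3]
      have hub : (2.7182818283:ℝ) ^ 3 ≤ Real.exp 1 ^ 3 :=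
        pow_le_pow_left₀ (by norm_num) Real.exp_one_gt_d9.le 3
      norm_num at hub ⊢
      linarith
    · have ihm := ih h
      have he : Real.exp ((m:ℝ) + 1) = Real.exp m * Real.exp 1 := by rw [Real.exp_add]
      have h1 : (2:ℝ) ≤ Real.exp 1 := by nlinarith [Real.exp_one_gt_d9]
      have hp : (0:ℝ) < Real.exp m := Real.exp_pos _
      have hc : ((m+1:ℕ):ℝ) = (m:ℝ) + 1 := by push_cast; ring
      rw [hc, he]
      have hpow : (2:ℝ) ^ (m + 1 + 1) = 2 * 2 ^ (m + 1) := by ring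
      nlinarith [mul_nonneg (by linarith : (0:ℝ) ≤ Real.exp 1 - 2) hp.le]

lemma GrAux.two_pow_le_sinh (r : ℕ) (hr : 3 ≤ r) : (2:ℝ) ^ r ≤ Real.sinh r := by
  have h := GrAux.exp_lb r hr
  have h2 : Real.exp (-(r:ℝ)) ≤ 1 := Real.exp_le_one_iff.2 (neg_nonpos.2 (by positivity))
  rw [Real.sinh_eq]
  have hpow : (2:ℝ) ^ (r + 1) = 2 * 2 ^ r := by ring
  linarith

/-- Same-level law-of-cosines computation: consecutive vertices are at distance
exactly `2r`. -/
lemma GrAux.level_close (r k : ℕ) (hk : 2 ≤ k) :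
    Real.cosh (rho r k) * Real.cosh (rho r k) -
      Real.sinh (rho r k) * Real.sinh (rho r k) * Real.cos (2 * (π / 2 ^ k)) =
    Real.cosh (2 * (r : ℝ)) := by
  have hPk := GrAux.sinh_rho_mul r k (by omega)
  have h6 : Real.sinh (rho r k) ^ 2 * Real.sin (π / 2 ^ k) ^ 2 = Real.sinh (r:ℝ) ^ 2 := by
    rw [← mul_pow, hPk]
  have h1 := Real.cos_two_mul' (π / 2 ^ k)
  have h2 := Real.sin_sq_add_cos_sq (π / 2 ^ k)
  have h3 := Real.cosh_sq_sub_sinh_sq (rho r k)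
  have h5 := Real.cosh_sq_sub_sinh_sq ((r:ℝ))
  rw [h1, Real.cosh_two_mul]
  linear_combination h3 - Real.sinh (rho r k) ^ 2 * h2 - h5 + 2 * h6

set_option maxHeartbeats 1000000 in
/-- Cross-level estimate: vertex `(i,1)` and the level-`j` vertex at angular
distance `π/2^j` are within distance `2r`. -/
lemma GrAux.cross_close (r i j : ℕ) (hi : 2 ≤ i) (hij : i < j) (hjr : j ≤ r) :
    Real.cosh (rho r i) * Real.cosh (rho r j) -
      Real.sinh (rho r i) * Real.sinh (rho r j) * Real.cos (π / 2 ^ j) ≤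
    Real.cosh (2 * (r : ℝ)) := by
  have hj : 2 ≤ j := by omega
  have hr3 : 3 ≤ r := by omega
  set S := Real.sinh ((r:ℝ)) with hSdef
  set si := Real.sin (π / 2 ^ i) with hsidef
  set sj := Real.sin (π / 2 ^ j) with hsjdef
  set sc := Real.sin (π / 2 ^ (j + 1)) with hscdef
  set cc := Real.cos (π / 2 ^ (j + 1)) with hccdef
  set Si := Real.sinh (rho r i) with hSidef
  set Sj := Real.sinh (rho r j) with hSjdef
  have hsi : 0 < si := GrAux.sin_lvl_pos i (by omega)
  have hsj : 0 < sj := GrAux.sin_lvl_pos j (by omega)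
  have hsc : 0 < sc := GrAux.sin_lvl_pos (j + 1) (by omega)
  have hsi_lb : 2 / 2 ^ i ≤ si := GrAux.sin_lvl_lb i (by omega)
  have hsc_ub : sc ≤ π / 2 ^ (j + 1) := Real.sin_le (by positivity)
  -- cc ≥ 1/2
  have hcc : (1:ℝ) / 2 ≤ cc := by
    have hle : π / 2 ^ (j + 1) ≤ π / 3 := by
      apply div_le_div_of_nonneg_left Real.pi_pos.le (by norm_num)
      calc (3:ℝ) ≤ 2 ^ 3 := by norm_num
      _ ≤ 2 ^ (j + 1) := by exact pow_le_pow_right₀ (by norm_num) (by omega)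
    have := Real.cos_le_cos_of_nonneg_of_le_pi (by positivity)
      (by linarith [Real.pi_pos] : π / 3 ≤ π) hle
    rw [Real.cos_pi_div_three] at this
    exact this
  -- double angle for sj
  have hdj : sj = 2 * sc * cc := by
    rw [hsjdef, hscdef, hccdef, show π / 2 ^ j = 2 * (π / 2 ^ (j + 1)) by
      rw [pow_succ]; ring, Real.sin_two_mul]
  -- key : sc ≤ si * cc
  have hkey : sc ≤ si * cc := by
    have h1 : π / 2 ^ (j + 1) ≤ π / 2 ^ (i + 2) := by
      apply div_le_div_of_nonneg_left Real.pi_pos.le (by positivity)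
      exact pow_le_pow_right₀ (by norm_num) (by omega)
    have h2 : π / 2 ^ (i + 2) ≤ 4 / 2 ^ (i + 2) := by
      apply div_le_div_of_nonneg_right Real.pi_le_four (by positivity)
    have h3 : (4:ℝ) / 2 ^ (i + 2) = 1 / 2 ^ i := by
      rw [pow_add]; field_simp; ring
    have h4 : (2 / 2 ^ i) * ((1:ℝ) / 2) ≤ si * cc :=
      mul_le_mul hsi_lb hcc (by norm_num) hsi.le
    have h5 : (2 / 2 ^ i) * ((1:ℝ) / 2) = 1 / 2 ^ i := by ring
    linarith
  have hSi_mul : Si * si = S := GrAux.sinh_rho_mul r i (by omega)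
  have hSj_mul : Sj * sj = S := GrAux.sinh_rho_mul r j (by omega)
  have hSi0 : 0 ≤ Si := GrAux.sinh_rho_nonneg r i (by omega)
  have hSj0 : 0 ≤ Sj := GrAux.sinh_rho_nonneg r j (by omega)
  have hS_lb : (2:ℝ) ^ r ≤ S := GrAux.two_pow_le_sinh r hr3
  have hS0 : (0:ℝ) ≤ S := le_trans (by positivity) hS_lb
  -- Si + Sj ≤ S ^ 2
  have hSi_ub : Si ≤ S * 2 ^ i / 2 := by
    have h1 : Si * (2 / 2 ^ i) ≤ Si * si := by
      apply mul_le_mul_of_nonneg_left hsi_lb hSi0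
    rw [hSi_mul] at h1
    have hp : (0:ℝ) < 2 ^ i := by positivity
    rw [le_div_iff₀ (by norm_num : (0:ℝ) < 2)]
    calc Si * 2 = (Si * (2 / 2 ^ i)) * 2 ^ i := by field_simp
    _ ≤ S * 2 ^ i := by exact mul_le_mul_of_nonneg_right h1 hp.le
  have hSj_ub : Sj ≤ S * 2 ^ j / 2 := by
    have h1 : Sj * (2 / 2 ^ j) ≤ Sj * sj := by
      apply mul_le_mul_of_nonneg_left (GrAux.sin_lvl_lb j (by omega)) hSj0
    rw [hSj_mul] at h1
    have hp : (0:ℝ) < 2 ^ j := by positivity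
    rw [le_div_iff₀ (by norm_num : (0:ℝ) < 2)]
    calc Sj * 2 = (Sj * (2 / 2 ^ j)) * 2 ^ j := by field_simp
    _ ≤ S * 2 ^ j := by exact mul_le_mul_of_nonneg_right h1 hp.le
  have hpow_ij : (2:ℝ) ^ i ≤ 2 ^ j := pow_le_pow_right₀ (by norm_num) (by omega)
  have hpow_jr : (2:ℝ) ^ j ≤ 2 ^ r := pow_le_pow_right₀ (by norm_num) hjr
  have hsum : Si + Sj ≤ S ^ 2 := by
    have h1 : Si + Sj ≤ S * 2 ^ j := by
      have := mul_le_mul_of_nonneg_left hpow_ij hS0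
      linarith
    have h2 : S * 2 ^ j ≤ S * S := by
      apply mul_le_mul_of_nonneg_left _ hS0
      exact le_trans hpow_jr hS_lb
    nlinarith
  -- 2 sc^2 ≤ si * sj
  have h2sc : 2 * sc ^ 2 ≤ si * sj := by
    rw [hdj]
    nlinarith [hkey, hsc]
  -- 2 Si Sj sc^2 ≤ S^2
  have hterm : 2 * (Si * Sj) * sc ^ 2 ≤ S ^ 2 := by
    have h1 : (Si * Sj) * (2 * sc ^ 2) ≤ (Si * Sj) * (si * sj) :=
      mul_le_mul_of_nonneg_left h2sc (mul_nonneg hSi0 hSj0)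
    have h2 : (Si * Sj) * (si * sj) = S * S := by
      calc (Si * Sj) * (si * sj) = (Si * si) * (Sj * sj) := by ring
      _ = S * S := by rw [hSi_mul, hSj_mul]
    nlinarith
  -- cosh bounds
  have hCi : Real.cosh (rho r i) ≤ 1 + Si :=
    GrAux.cosh_le_one_add_sinh (GrAux.rho_nonneg r i (by omega))
  have hCj : Real.cosh (rho r j) ≤ 1 + Sj :=
    GrAux.cosh_le_one_add_sinh (GrAux.rho_nonneg r j (by omega))
  have hmul : Real.cosh (rho r i) * Real.cosh (rho r j) ≤ (1 + Si) * (1 + Sj) :=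
    mul_le_mul hCi hCj (Real.cosh_pos _).le (by linarith)
  -- rewrite cos and cosh(2r)
  have hcos : Real.cos (π / 2 ^ j) = 1 - 2 * sc ^ 2 := by
    rw [show π / 2 ^ j = 2 * (π / 2 ^ (j + 1)) by rw [pow_succ]; ring,
      Real.cos_two_mul']
    have := Real.sin_sq_add_cos_sq (π / 2 ^ (j + 1))
    rw [← hscdef, ← hccdef] at this ⊢
    linarith
  have hc2r : Real.cosh (2 * (r:ℝ)) = 2 * S ^ 2 + 1 := by
    rw [Real.cosh_two_mul, Real.cosh_sq]
    ring
  rw [hcos, hc2r]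
  nlinarith [hmul, hsum, hterm]

end Aux

/-- Content behind Corollary 14:
(a) every two levels `2 ≤ i ≤ j ≤ r` of `G_r` are joined by an edge between
two distinct vertices, and
(b) consecutive vertices within each level are adjacent (including the wrap-around
edge), so each level induces a cycle and is in particular connected.
Contracting each level hence yields a complete graph on the `r − 1` levels,
i.e. a clique minor of size `r − 1` in `G_r`. -/
theorem Gr_levels_join_and_cycles (r : ℕ) (hr : 2 ≤ r) :
    (∀ i j : ℕ, 2 ≤ i → i ≤ j → j ≤ r →
      ∃ m m' : ℕ, 1 ≤ m ∧ m ≤ 2 ^ i ∧ 1 ≤ m' ∧ m' ≤ 2 ^ j ∧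
        (Gr r).Adj (some (i, m)) (some (j, m'))) ∧
    (∀ k m : ℕ, 2 ≤ k → k ≤ r → 1 ≤ m → m < 2 ^ k →
      (Gr r).Adj (some (k, m)) (some (k, m + 1))) ∧
    (∀ k : ℕ, 2 ≤ k → k ≤ r → (Gr r).Adj (some (k, 2 ^ k)) (some (k, 1))) := by
  have hconsec : ∀ k m : ℕ, 2 ≤ k → k ≤ r → 1 ≤ m → m < 2 ^ k →
      (Gr r).Adj (some (k, m)) (some (k, m + 1)) := by
    intro k m hk hkr hm hm2
    refine ⟨by simp, ?_⟩
    show Real.cosh (rho r k) * Real.cosh (rho r k) -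
        Real.sinh (rho r k) * Real.sinh (rho r k) *
          Real.cos (theta k m - theta k (m + 1)) ≤ Real.cosh (2 * (r : ℝ))
    have hθ : theta k m - theta k (m + 1) = -(2 * (Real.pi / 2 ^ k)) := by
      unfold theta; push_cast; ring
    rw [hθ, Real.cos_neg, GrAux.level_close r k hk]
  have hwrap : ∀ k : ℕ, 2 ≤ k → k ≤ r → (Gr r).Adj (some (k, 2 ^ k)) (some (k, 1)) := by
    intro k hk hkr
    have h4 : 4 ≤ 2 ^ k := by
      calc 4 = 2 ^ 2 := rfl
      _ ≤ 2 ^ k := Nat.pow_le_pow_right (by norm_num) hk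
    refine ⟨by simp; omega, ?_⟩
    show Real.cosh (rho r k) * Real.cosh (rho r k) -
        Real.sinh (rho r k) * Real.sinh (rho r k) *
          Real.cos (theta k (2 ^ k) - theta k 1) ≤ Real.cosh (2 * (r : ℝ))
    have hθ : theta k (2 ^ k) - theta k 1 = 2 * Real.pi - 2 * (Real.pi / 2 ^ k) := by
      unfold theta
      push_cast
      have h2 : (2:ℝ) ^ k ≠ 0 := by positivity
      field_simp
      ring
    rw [hθ, Real.cos_two_pi_sub, GrAux.level_close r k hk]
  refine ⟨?_, hconsec, hwrap⟩
  intro i j hi hij hjr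
  rcases eq_or_lt_of_le hij with rfl | hlt
  · -- same level: consecutive vertices 1 and 2
    have h4 : 4 ≤ 2 ^ i := by
      calc 4 = 2 ^ 2 := rfl
      _ ≤ 2 ^ i := Nat.pow_le_pow_right (by norm_num) hi
    exact ⟨1, 2, le_refl 1, by omega, by omega, by omega,
      hconsec i 1 hi hjr (le_refl 1) (by omega)⟩
  · -- different levels
    obtain ⟨d, rfl⟩ : ∃ d, j = i + d + 1 := ⟨j - i - 1, by omega⟩
    refine ⟨1, 2 ^ d, le_refl 1, Nat.one_le_two_pow, Nat.one_le_two_pow,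
      Nat.pow_le_pow_right (by norm_num) (by omega), ?_⟩
    refine ⟨by simp; omega, ?_⟩
    show Real.cosh (rho r i) * Real.cosh (rho r (i + d + 1)) -
        Real.sinh (rho r i) * Real.sinh (rho r (i + d + 1)) *
          Real.cos (theta i 1 - theta (i + d + 1) (2 ^ d)) ≤ Real.cosh (2 * (r : ℝ))
    have hθ : theta i 1 - theta (i + d + 1) (2 ^ d) = Real.pi / 2 ^ (i + d + 1) := by
      unfold theta
      push_cast
      have hpow : (2:ℝ) ^ (i + d + 1) = 2 ^ i * 2 ^ d * 2 := by
        rw [pow_add, pow_add, pow_one]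
      rw [hpow]
      have h1 : (2:ℝ) ^ i ≠ 0 := by positivity
      have h2 : (2:ℝ) ^ d ≠ 0 := by positivity
      field_simp
      ring
    rw [hθ]
    exact GrAux.cross_close r i (i + d + 1) hi (by omega) hjr
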